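/- Let s* ∈ ℤ with 2 ≤ s* ≤ N − 1 and Δ ∈ ℝ. If max{0, B₋(s*)} ≤ Δ ≤ B₊(s*), then s* is a minimizer of the function s ↦ v_U(s; δ+Δ, φ) over {1, …, N}. -/

import Mathlib

open Finset

/-- `v_U(s; δ, φ) = κσ²(1 − ρ + ρs + δ)/s − (Σ_{i=1}^s r̄_[i])/s + φs`. -/
noncomputable def vU (κ σ ρ δ φ : ℝ) (r : ℕ → ℝ) (s : ℕ) : ℝ :=
  κ * σ ^ 2 * (1 - ρ + ρ * s + δ) / s - (∑ i ∈ Finset.Icc 1 s, r i) / s + φ * s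

/-- `B₋(s*) = ρ − δ − 1 − (1/(κσ²)) min_{1 ≤ l < s*}
  ((l Σ_{i≤s*} r̄_[i] − s* Σ_{i≤l} r̄_[i])/(s* − l) − φ s* l)`. -/
noncomputable def Bminus (κ σ ρ δ φ : ℝ) (r : ℕ → ℝ) (sstar : ℕ) : ℝ :=
  ρ - δ - 1 - (1 / (κ * σ ^ 2)) *
    sInf {y : ℝ | ∃ l : ℕ, 1 ≤ l ∧ l < sstar ∧
      y = ((l : ℝ) * (∑ i ∈ Finset.Icc 1 sstar, r i)
            - (sstar : ℝ) * (∑ i ∈ Finset.Icc 1 l, r i)) / ((sstar : ℝ) - (l : ℝ))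
          - φ * (sstar : ℝ) * (l : ℝ)}

/-- `B₊(s*) = ρ − δ − 1 + (1/(κσ²)) min_{s* < l ≤ N}
  ((l Σ_{i≤s*} r̄_[i] − s* Σ_{i≤l} r̄_[i])/(l − s*) + φ s* l)`. -/
noncomputable def Bplus (N : ℕ) (κ σ ρ δ φ : ℝ) (r : ℕ → ℝ) (sstar : ℕ) : ℝ :=
  ρ - δ - 1 + (1 / (κ * σ ^ 2)) *
    sInf {y : ℝ | ∃ l : ℕ, sstar < l ∧ l ≤ N ∧
      y = ((l : ℝ) * (∑ i ∈ Finset.Icc 1 sstar, r i)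
            - (sstar : ℝ) * (∑ i ∈ Finset.Icc 1 l, r i)) / ((l : ℝ) - (sstar : ℝ))
          + φ * (sstar : ℝ) * (l : ℝ)}

/-- Auxiliary: comparison of `vU` at two points after clearing denominators. -/
lemma vU_le_of_key (κ σ ρ δ φ : ℝ) (r : ℕ → ℝ) (a b : ℕ) (ha : 0 < a) (hb : 0 < b)
    (hkey : κ * σ ^ 2 * (1 - ρ + δ) * ((b : ℝ) - (a : ℝ)) ≤
      (b : ℝ) * (∑ i ∈ Finset.Icc 1 a, r i) - (a : ℝ) * (∑ i ∈ Finset.Icc 1 b, r i)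
        + φ * (a : ℝ) * (b : ℝ) * ((b : ℝ) - (a : ℝ))) :
    vU κ σ ρ δ φ r a ≤ vU κ σ ρ δ φ r b := by
  have ha' : (0 : ℝ) < (a : ℝ) := by exact_mod_cast ha
  have hb' : (0 : ℝ) < (b : ℝ) := by exact_mod_cast hb
  have ea : vU κ σ ρ δ φ r a =
      (κ * σ ^ 2 * (1 - ρ + ρ * a + δ) - (∑ i ∈ Finset.Icc 1 a, r i) + φ * (a : ℝ) ^ 2) / a := by
    rw [vU]; field_simp
  have eb : vU κ σ ρ δ φ r b =
      (κ * σ ^ 2 * (1 - ρ + ρ * b + δ) - (∑ i ∈ Finset.Icc 1 b, r i) + φ * (b : ℝ) ^ 2) / b := by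
    rw [vU]; field_simp
  rw [ea, eb, div_le_div_iff₀ ha' hb']
  nlinarith [hkey]

/-- Proposition 4, condition C2: if `max{0, B₋(s*)} ≤ Δ ≤ B₊(s*)`
then `s*` is a minimizer of `s ↦ v_U(s; δ+Δ, φ)` over `{1,…,N}`. -/
theorem stmt11 (N : ℕ) (hN : 3 ≤ N) (κ σ ρ δ φ : ℝ)
    (hκ : 0 < κ) (hσ : 0 < σ) (hρ1 : -1 < ρ) (hρ2 : ρ < 1) (hδ : 0 ≤ δ) (hφ : 0 < φ)
    (r : ℕ → ℝ) (hr : ∀ i j : ℕ, 1 ≤ i → i ≤ j → j ≤ N → r j ≤ r i)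
    (sstar : ℕ) (hs1 : 2 ≤ sstar) (hs2 : sstar ≤ N - 1)
    (Δ : ℝ) (hΔge : max 0 (Bminus κ σ ρ δ φ r sstar) ≤ Δ)
    (hΔle : Δ ≤ Bplus N κ σ ρ δ φ r sstar) :
    ∀ s : ℕ, 1 ≤ s → s ≤ N →
      vU κ σ ρ (δ + Δ) φ r sstar ≤ vU κ σ ρ (δ + Δ) φ r s := by
  intro s h1 h2
  have hc : (0 : ℝ) < κ * σ ^ 2 := by positivity
  have hsstar0 : 0 < sstar := by omega
  have hs0 : 0 < s := h1
  set Rs : ℝ := ∑ i ∈ Finset.Icc 1 sstar, r i with hRs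
  set Rl : ℝ := ∑ i ∈ Finset.Icc 1 s, r i with hRl
  rcases lt_trichotomy s sstar with hlt | heq | hgt
  · -- case s < sstar : use Bminus
    set S : Set ℝ := {y : ℝ | ∃ l : ℕ, 1 ≤ l ∧ l < sstar ∧
      y = ((l : ℝ) * (∑ i ∈ Finset.Icc 1 sstar, r i)
            - (sstar : ℝ) * (∑ i ∈ Finset.Icc 1 l, r i)) / ((sstar : ℝ) - (l : ℝ))
          - φ * (sstar : ℝ) * (l : ℝ)} with hS
    have hfin : S.Finite := by
      have hsub : S ⊆ (fun l : ℕ => ((l : ℝ) * (∑ i ∈ Finset.Icc 1 sstar, r i)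
            - (sstar : ℝ) * (∑ i ∈ Finset.Icc 1 l, r i)) / ((sstar : ℝ) - (l : ℝ))
          - φ * (sstar : ℝ) * (l : ℝ)) '' (Set.Iio sstar) := by
        rintro y ⟨l, _, hl2, rfl⟩
        exact ⟨l, hl2, rfl⟩
      exact Set.Finite.subset ((Set.finite_Iio sstar).image _) hsub
    have hmem : (((s : ℝ) * Rs - (sstar : ℝ) * Rl) / ((sstar : ℝ) - (s : ℝ))
          - φ * (sstar : ℝ) * (s : ℝ)) ∈ S := ⟨s, h1, hlt, rfl⟩
    have hIle : sInf S ≤ ((s : ℝ) * Rs - (sstar : ℝ) * Rl) / ((sstar : ℝ) - (s : ℝ))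
          - φ * (sstar : ℝ) * (s : ℝ) := csInf_le hfin.bddBelow hmem
    have hB : ρ - δ - 1 - (1 / (κ * σ ^ 2)) * sInf S ≤ Δ :=
      le_trans (le_of_eq rfl) (le_trans (le_max_right 0 _) hΔge)
    have hA : (ρ - δ - 1 - Δ) * (κ * σ ^ 2) ≤ sInf S := by
      have h2' : ρ - δ - 1 - Δ ≤ (1 / (κ * σ ^ 2)) * sInf S := by linarith
      have h3 := mul_le_mul_of_nonneg_right h2' hc.le
      have h4 : (1 / (κ * σ ^ 2)) * sInf S * (κ * σ ^ 2) = sInf S := by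
        field_simp
      linarith [h3, h4.le, h4.ge]
    have hA2 : (ρ - δ - 1 - Δ) * (κ * σ ^ 2) + φ * (sstar : ℝ) * (s : ℝ) ≤
        ((s : ℝ) * Rs - (sstar : ℝ) * Rl) / ((sstar : ℝ) - (s : ℝ)) := by linarith
    have hden : (0 : ℝ) < (sstar : ℝ) - (s : ℝ) := by
      have : (s : ℝ) < (sstar : ℝ) := by exact_mod_cast hlt
      linarith
    have hA3 := (le_div_iff₀ hden).mp hA2
    apply vU_le_of_key κ σ ρ (δ + Δ) φ r sstar s hsstar0 hs0
    nlinarith [hA3]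
  · subst heq; exact le_refl _
  · -- case sstar < s : use Bplus
    set S : Set ℝ := {y : ℝ | ∃ l : ℕ, sstar < l ∧ l ≤ N ∧
      y = ((l : ℝ) * (∑ i ∈ Finset.Icc 1 sstar, r i)
            - (sstar : ℝ) * (∑ i ∈ Finset.Icc 1 l, r i)) / ((l : ℝ) - (sstar : ℝ))
          + φ * (sstar : ℝ) * (l : ℝ)} with hS
    have hfin : S.Finite := by
      have hsub : S ⊆ (fun l : ℕ => ((l : ℝ) * (∑ i ∈ Finset.Icc 1 sstar, r i)
            - (sstar : ℝ) * (∑ i ∈ Finset.Icc 1 l, r i)) / ((l : ℝ) - (sstar : ℝ))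
          + φ * (sstar : ℝ) * (l : ℝ)) '' (Set.Iic N) := by
        rintro y ⟨l, _, hl2, rfl⟩
        exact ⟨l, hl2, rfl⟩
      exact Set.Finite.subset ((Set.finite_Iic N).image _) hsub
    have hmem : (((s : ℝ) * Rs - (sstar : ℝ) * Rl) / ((s : ℝ) - (sstar : ℝ))
          + φ * (sstar : ℝ) * (s : ℝ)) ∈ S := ⟨s, hgt, h2, rfl⟩
    have hIle : sInf S ≤ ((s : ℝ) * Rs - (sstar : ℝ) * Rl) / ((s : ℝ) - (sstar : ℝ))
          + φ * (sstar : ℝ) * (s : ℝ) := csInf_le hfin.bddBelow hmem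
    have hB : Δ ≤ ρ - δ - 1 + (1 / (κ * σ ^ 2)) * sInf S := hΔle
    have hA : (Δ - ρ + δ + 1) * (κ * σ ^ 2) ≤ sInf S := by
      have h2' : Δ - ρ + δ + 1 ≤ (1 / (κ * σ ^ 2)) * sInf S := by linarith
      have h3 := mul_le_mul_of_nonneg_right h2' hc.le
      have h4 : (1 / (κ * σ ^ 2)) * sInf S * (κ * σ ^ 2) = sInf S := by
        field_simp
      linarith [h3, h4.le, h4.ge]
    have hA2 : (Δ - ρ + δ + 1) * (κ * σ ^ 2) - φ * (sstar : ℝ) * (s : ℝ) ≤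
        ((s : ℝ) * Rs - (sstar : ℝ) * Rl) / ((s : ℝ) - (sstar : ℝ)) := by linarith
    have hden : (0 : ℝ) < (s : ℝ) - (sstar : ℝ) := by
      have : (sstar : ℝ) < (s : ℝ) := by exact_mod_cast hgt
      linarith
    have hA3 := (le_div_iff₀ hden).mp hA2
    apply vU_le_of_key κ σ ρ (δ + Δ) φ r sstar s hsstar0 hs0
    nlinarith [hA3]
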